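/- arXiv:1608.08079 — 5 statements merged into one kernel-verified Lean document; each statement's English description precedes it below -/
import Mathlib

section
/- Let c be a real number and let sequences of complex polynomials R_n be defined by R_0(z)=1, R_1(z)=(1+ic_1)z+(1-ic_1) and R_{n+1}(z)=[(1+ic_{n+1})z+(1-ic_{n+1})]R_n(z)-4d_{n+1} z R_{n-1}(z) for n≥1, where c_n=(-1)^n c and d_n>0. Then for every n≥0 the polynomial R_{2n} has real coefficients, and R_{2n+1}(z)=[(1-ic)z+(1+ic)]·S_n(z) for some polynomial S_n with real coefficients. -/
open Polynomial Complex

theorem stmt_0 (c : ℝ) (cseq d : ℕ → ℝ)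
    (hc : ∀ n, 1 ≤ n → cseq n = (-1 : ℝ) ^ n * c)
    (hd : ∀ n, 1 ≤ n → 0 < d n)
    (R : ℕ → Polynomial ℂ)
    (hR0 : R 0 = 1)
    (hR1 : R 1 = C (1 + I * (cseq 1 : ℂ)) * X + C (1 - I * (cseq 1 : ℂ)))
    (hRrec : ∀ n, 1 ≤ n →
      R (n + 1) = (C (1 + I * (cseq (n + 1) : ℂ)) * X + C (1 - I * (cseq (n + 1) : ℂ))) * R n
        - C (4 * (d (n + 1) : ℂ)) * X * R (n - 1)) :
    ∀ n : ℕ,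
      (∀ k, ((R (2 * n)).coeff k).im = 0) ∧
      ∃ S : Polynomial ℂ, (∀ k, (S.coeff k).im = 0) ∧
        R (2 * n + 1) = (C (1 - I * (c : ℂ)) * X + C (1 + I * (c : ℂ))) * S := by
  set L : Polynomial ℂ := C (1 - I * (c : ℂ)) * X + C (1 + I * (c : ℂ)) with hLdef
  set A : Subring (Polynomial ℂ) := (mapRingHom (algebraMap ℝ ℂ)).range with hA
  have hCA : ∀ r : ℝ, (C (r : ℂ)) ∈ A := fun r => ⟨C r, by simp⟩
  have hXA : (X : Polynomial ℂ) ∈ A := ⟨X, by simp⟩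
  have him : ∀ P ∈ A, ∀ k, (P.coeff k).im = 0 := by
    rintro P ⟨Q, rfl⟩ k
    simp [coeff_map]
  have hML : (C (1 + I * (c : ℂ)) * X + C (1 - I * (c : ℂ))) * L
      = C (((1 + c^2 : ℝ) : ℂ)) * X ^ 2 + C (((2 - 2 * c^2 : ℝ) : ℂ)) * X
        + C (((1 + c^2 : ℝ) : ℂ)) := by
    rw [hLdef]
    have e1 : ((1 + c^2 : ℝ) : ℂ) = (1 + I * c) * (1 - I * c) := by
      push_cast
      ring_nf
      rw [I_sq]
      ring
    have e2 : ((2 - 2 * c^2 : ℝ) : ℂ) = (1 + I * c) * (1 + I * c) + (1 - I * c) * (1 - I * c) := by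
      push_cast
      ring_nf
      rw [I_sq]
      ring
    rw [e1, e2]
    simp only [map_mul, map_add]
    ring
  have key : ∀ n : ℕ, R (2 * n) ∈ A ∧ ∃ S ∈ A, R (2 * n + 1) = L * S := by
    intro n
    induction n with
    | zero =>
      refine ⟨by rw [show 2*0 = 0 from rfl, hR0]; exact one_mem A, 1, one_mem A, ?_⟩
      have : (cseq 1 : ℂ) = -c := by rw [hc 1 le_rfl]; push_cast; ring
      rw [show 2*0+1 = 1 from rfl, hR1, this, hLdef]
      ring
    | succ n ih =>
      obtain ⟨h2n, S, hS, hodd⟩ := ih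
      have hce : (cseq (2*n+2) : ℂ) = c := by
        rw [hc (2*n+2) (by omega)]
        have : (-1 : ℝ) ^ (2*n+2) = 1 := Even.neg_one_pow ⟨n+1, by ring⟩
        rw [this]; push_cast; ring
      have hco : (cseq (2*n+3) : ℂ) = -c := by
        rw [hc (2*n+3) (by omega)]
        have : (-1 : ℝ) ^ (2*n+3) = -1 := Odd.neg_one_pow ⟨n+1, by ring⟩
        rw [this]; push_cast; ring
      have heven := hRrec (2*n+1) (by omega)
      rw [show 2*n+1+1 = 2*n+2 from rfl, show 2*n+1-1 = 2*n from rfl, hce, hodd] at heven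
      have hd2 : (4 * (d (2*n+2) : ℂ)) = ((4 * d (2*n+2) : ℝ) : ℂ) := by push_cast; ring
      have heven' : R (2*n+2)
          = (C (((1 + c^2 : ℝ) : ℂ)) * X ^ 2 + C (((2 - 2 * c^2 : ℝ) : ℂ)) * X
            + C (((1 + c^2 : ℝ) : ℂ))) * S - C (((4 * d (2*n+2) : ℝ) : ℂ)) * X * R (2*n) := by
        rw [heven, hd2, ← hML]; ring
      have h2A : R (2*n+2) ∈ A := by
        rw [heven']
        exact sub_mem (mul_mem (add_mem (add_mem (mul_mem (hCA _) (pow_mem hXA 2))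
          (mul_mem (hCA _) hXA)) (hCA _)) hS)
          (mul_mem (mul_mem (hCA _) hXA) h2n)
      refine ⟨by rwa [show 2*(n+1) = 2*n+2 from by ring], ?_⟩
      have hodd2 := hRrec (2*n+2) (by omega)
      rw [show 2*n+2+1 = 2*n+3 from rfl, show 2*n+2-1 = 2*n+1 from rfl, hco, hodd] at hodd2
      refine ⟨R (2*n+2) - C (4 * (d (2*n+3) : ℂ)) * X * S, ?_, ?_⟩
      · have hd3 : C (4 * (d (2*n+3) : ℂ)) = C (((4 * d (2*n+3) : ℝ) : ℂ)) := by push_cast; ring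
        rw [hd3]
        exact sub_mem h2A (mul_mem (mul_mem (hCA _) hXA) hS)
      · rw [show 2*(n+1)+1 = 2*n+3 from by ring, hodd2, hLdef]
        push_cast
        ring
  intro n
  obtain ⟨h1, S, hS, h2⟩ := key n
  exact ⟨him _ h1, S, him _ hS, h2⟩
end

section
/- Let p be an even positive integer. Let {c_n}_{n≥1} be real with c_{n+p} = c_n for all n and c_{2n} = -c_{2n-1} for all n ≥ 1, and let {m_n}_{n≥1} be real with m_{n+p} = m_n for all n. Define τ_0 = 1, τ_n = τ_{n-1}(1-ic_n)/(1+ic_n), and α_{n-1} = conj(τ_{n-1})·(1 - 2m_n - i c_n)/(1 - i c_n). Then the sequence {α_n}_{n≥0} is periodic with period p: α_{n+p} = α_n for all n ≥ 0. -/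
open Complex

theorem stmt_8 (p : ℕ) (hp : 0 < p) (hpeven : Even p)
    (cseq m : ℕ → ℝ)
    (hcper : ∀ n, 1 ≤ n → cseq (n + p) = cseq n)
    (hcalt : ∀ n, 1 ≤ n → cseq (2 * n) = -cseq (2 * n - 1))
    (hmper : ∀ n, 1 ≤ n → m (n + p) = m n)
    (τ : ℕ → ℂ) (hτ0 : τ 0 = 1)
    (hτ : ∀ n, 1 ≤ n → τ n = τ (n - 1) * ((1 - I * (cseq n : ℂ)) / (1 + I * (cseq n : ℂ))))
    (α : ℕ → ℂ)
    (hα : ∀ n, 1 ≤ n → α (n - 1) = starRingEnd ℂ (τ (n - 1)) *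
      ((1 - 2 * (m n : ℂ) - I * (cseq n : ℂ)) / (1 - I * (cseq n : ℂ)))) :
    ∀ n : ℕ, α (n + p) = α n := by
  have hne : ∀ c : ℝ, (1 + I * (c : ℂ)) ≠ 0 := by
    intro c h
    have := congrArg Complex.re h
    simp at this
  have hne' : ∀ c : ℝ, (1 - I * (c : ℂ)) ≠ 0 := by
    intro c h
    have := congrArg Complex.re h
    simp at this
  have heven : ∀ k, τ (2 * k) = 1 := by
    intro k
    induction k with
    | zero => simpa using hτ0
    | succ k ih =>
      have e : 2 * (k + 1) = 2 * k + 2 := by ring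
      have h1 := hτ (2 * k + 1) (by omega)
      have h2 := hτ (2 * k + 2) (by omega)
      have hc : cseq (2 * k + 2) = -cseq (2 * k + 1) := by
        have h := hcalt (k + 1) (by omega)
        have e1 : 2 * (k + 1) = 2 * k + 2 := by ring
        have e2 : 2 * (k + 1) - 1 = 2 * k + 1 := by omega
        rw [e2, e1] at h
        exact h
      simp only [Nat.add_sub_cancel, show 2 * k + 2 - 1 = 2 * k + 1 from by omega] at h1 h2
      rw [e, h2, h1, ih, hc, one_mul]
      push_cast
      set c : ℂ := (cseq (2 * k + 1) : ℂ) with hcdef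
      rw [show (1 : ℂ) - I * -c = 1 + I * c from by ring,
        show (1 : ℂ) + I * -c = 1 - I * c from by ring, div_mul_div_comm,
        mul_comm ((1:ℂ) - I * c)]
      exact div_self (mul_ne_zero (hne _) (hne' _))
  have hτper : ∀ n, τ (n + p) = τ n := by
    obtain ⟨q, hq⟩ := hpeven
    intro n
    rcases Nat.even_or_odd n with ⟨k, hk⟩ | ⟨k, hk⟩
    · have e1 : n + p = 2 * (k + q) := by omega
      have e2 : n = 2 * k := by omega
      rw [e1, e2, heven, heven]
    · have e1 : n + p = 2 * (k + q) + 1 := by omega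
      have e2 : n = 2 * k + 1 := by omega
      have h1 := hτ (2 * k + 1) (by omega)
      have h2 := hτ (2 * (k + q) + 1) (by omega)
      simp only [Nat.add_sub_cancel] at h1 h2
      have hc : cseq (2 * (k + q) + 1) = cseq (2 * k + 1) := by
        have := hcper (2 * k + 1) (by omega)
        have e3 : 2 * k + 1 + p = 2 * (k + q) + 1 := by omega
        rw [e3] at this
        exact this
      rw [e1, e2, h1, h2, heven, heven, hc]
  intro n
  have A := hα (n + 1) (by omega)
  have B := hα (n + 1 + p) (by omega)
  simp only [Nat.add_sub_cancel] at A
  have e4 : n + 1 + p - 1 = n + p := by omega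
  rw [e4] at B
  have hc : cseq (n + 1 + p) = cseq (n + 1) := hcper (n + 1) (by omega)
  have hm : m (n + 1 + p) = m (n + 1) := hmper (n + 1) (by omega)
  rw [B, A, hc, hm, hτper]
end

section
/- Let b₁, b₂ ∈ (-1,1) and c ∈ R. Set α_{2n} = (b₁ + ic)/(1 + ic) and α_{2n+1} = (b₂ - ic)/(1 + ic) for all n ≥ 0. Define the transfer matrices A(α,z) = (1-|α|²)^{-1/2}·[[z, -conj(α)],[-αz, 1]] and T₂(z) = A(α₁,z)·A(α₀,z), and Δ(z) = z^{-1}·Tr(T₂(z)). Then for every real θ, Δ(e^{iθ}) = 2·[(1+c²)cos θ + b₁b₂ - c²] / √((1-b₁²)(1-b₂²)). -/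
open Complex

lemma aux (b c : ℝ) : (1 - ‖((b : ℂ) + I * (c : ℂ)) / (1 + I * (c : ℂ))‖ ^ 2 : ℝ)
    = (1 - b^2)/(1+c^2) := by
  have hc : (1:ℝ) + c^2 ≠ 0 := by positivity
  rw [norm_div, div_pow, Complex.sq_norm, Complex.sq_norm, Complex.normSq_apply,
    Complex.normSq_apply]
  simp only [Complex.add_re, Complex.add_im, Complex.one_re, Complex.one_im, Complex.mul_re,
    Complex.mul_im, Complex.I_re, Complex.I_im, Complex.ofReal_re, Complex.ofReal_im]
  have h : (1 + (0 * c - 1 * 0)) * (1 + (0 * c - 1 * 0)) + (0 + (0 * 0 + 1 * c)) * (0 + (0 * 0 + 1 * c)) = 1 + c^2 := by ring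
  rw [h]
  field_simp
  ring

lemma aux2 (b c : ℝ) : (1 - ‖((b : ℂ) - I * (c : ℂ)) / (1 + I * (c : ℂ))‖ ^ 2 : ℝ)
    = (1 - b^2)/(1+c^2) := by
  have hc : (1:ℝ) + c^2 ≠ 0 := by positivity
  rw [norm_div, div_pow, Complex.sq_norm, Complex.sq_norm, Complex.normSq_apply,
    Complex.normSq_apply]
  simp only [Complex.sub_re, Complex.sub_im, Complex.add_re, Complex.add_im, Complex.one_re,
    Complex.one_im, Complex.mul_re, Complex.mul_im, Complex.I_re, Complex.I_im,
    Complex.ofReal_re, Complex.ofReal_im]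
  have h : (1 + (0 * c - 1 * 0)) * (1 + (0 * c - 1 * 0)) + (0 + (0 * 0 + 1 * c)) * (0 + (0 * 0 + 1 * c)) = 1 + c^2 := by ring
  rw [h]
  field_simp
  ring

lemma aux3 (x y c : ℝ) (hx : 0 < x) (hy : 0 < y) :
    (x/(1+c^2))^(-(1:ℝ)/2) * (y/(1+c^2))^(-(1:ℝ)/2) = (1+c^2)/Real.sqrt (x*y) := by
  have h : ∀ a : ℝ, 0 < a → a ^ (-(1:ℝ)/2) = (Real.sqrt a)⁻¹ := by
    intro a ha
    rw [show (-(1:ℝ)/2) = -(1/2) by norm_num, Real.rpow_neg ha.le, ← Real.sqrt_eq_rpow]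
  have hc : (0:ℝ) < 1 + c^2 := by positivity
  rw [h _ (by positivity), h _ (by positivity), ← mul_inv,
    ← Real.sqrt_mul (by positivity),
    show x/(1+c^2) * (y/(1+c^2)) = (x*y)/((1+c^2)^2) by rw [div_mul_div_comm, ← sq],
    Real.sqrt_div (by positivity), Real.sqrt_sq hc.le, inv_div]

theorem stmt_13 (b₁ b₂ c : ℝ) (hb₁ : b₁ ∈ Set.Ioo (-1 : ℝ) 1) (hb₂ : b₂ ∈ Set.Ioo (-1 : ℝ) 1)
    (α : ℕ → ℂ)
    (hα0 : ∀ n, α (2 * n) = ((b₁ : ℂ) + I * (c : ℂ)) / (1 + I * (c : ℂ)))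
    (hα1 : ∀ n, α (2 * n + 1) = ((b₂ : ℂ) - I * (c : ℂ)) / (1 + I * (c : ℂ)))
    (A : ℂ → ℂ → Matrix (Fin 2) (Fin 2) ℂ)
    (hA : ∀ a z, A a z = (((1 - ‖a‖ ^ 2 : ℝ) ^ (-(1 : ℝ) / 2) : ℝ) : ℂ) •
      !![z, -starRingEnd ℂ a; -a * z, 1])
    (T₂ : ℂ → Matrix (Fin 2) (Fin 2) ℂ)
    (hT : ∀ z, T₂ z = A (α 1) z * A (α 0) z)
    (Δ : ℂ → ℂ)
    (hΔ : ∀ z, Δ z = z⁻¹ * (T₂ z).trace) :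
    ∀ θ : ℝ, Δ (Complex.exp (I * θ)) =
      ((2 * ((1 + c ^ 2) * Real.cos θ + b₁ * b₂ - c ^ 2) /
        Real.sqrt ((1 - b₁ ^ 2) * (1 - b₂ ^ 2)) : ℝ) : ℂ) := by
  intro θ
  obtain ⟨hb₁l, hb₁r⟩ := hb₁
  obtain ⟨hb₂l, hb₂r⟩ := hb₂
  have hx1 : (0:ℝ) < 1 - b₁^2 := by nlinarith
  have hx2 : (0:ℝ) < 1 - b₂^2 := by nlinarith
  have hc : (0:ℝ) < 1 + c^2 := by positivity
  have h0 : α 0 = ((b₁ : ℂ) + I * (c : ℂ)) / (1 + I * (c : ℂ)) := by simpa using hα0 0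
  have h1 : α 1 = ((b₂ : ℂ) - I * (c : ℂ)) / (1 + I * (c : ℂ)) := by simpa using hα1 0
  rw [hΔ, hT, hA, hA, h0, h1]
  simp only [Matrix.trace_fin_two, Matrix.mul_apply, Fin.sum_univ_two, Matrix.smul_apply,
    smul_eq_mul, Matrix.cons_val', Matrix.cons_val_zero, Matrix.cons_val_one, Matrix.head_cons,
    Matrix.empty_val', Matrix.cons_val_fin_one, Matrix.of_apply, Matrix.head_fin_const]
  rw [aux b₁ c, aux2 b₂ c]
  set z := Complex.exp (I * (θ:ℂ)) with hzdef
  set a₀ : ℂ := ((b₁ : ℂ) + I * (c : ℂ)) / (1 + I * (c : ℂ)) with ha0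
  set a₁ : ℂ := ((b₂ : ℂ) - I * (c : ℂ)) / (1 + I * (c : ℂ)) with ha1
  set k₁ : ℝ := ((1 - b₂^2)/(1+c^2)) ^ (-(1:ℝ)/2) with hk1
  set k₀ : ℝ := ((1 - b₁^2)/(1+c^2)) ^ (-(1:ℝ)/2) with hk0
  have hz : z ≠ 0 := Complex.exp_ne_zero _
  have key : (k₁:ℂ) * z * ((k₀:ℂ) * z) + (k₁:ℂ) * -(starRingEnd ℂ) a₁ * ((k₀:ℂ) * (-a₀ * z)) +
      ((k₁:ℂ) * (-a₁ * z) * ((k₀:ℂ) * -(starRingEnd ℂ) a₀) + (k₁:ℂ) * 1 * ((k₀:ℂ) * 1)) =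
      ((k₁ * k₀ : ℝ) : ℂ) * (z^2 + 1 + z * ((starRingEnd ℂ) a₁ * a₀ + a₁ * (starRingEnd ℂ) a₀)) := by
    push_cast
    ring
  rw [key]
  have hK : k₁ * k₀ = (1+c^2)/Real.sqrt ((1-b₂^2)*(1-b₁^2)) := aux3 _ _ c hx2 hx1
  have hIc : (1:ℂ) + I * (c:ℂ) ≠ 0 := by
    intro h
    have := congrArg Complex.re h
    simp at this
  have hIc' : (1:ℂ) - I * (c:ℂ) ≠ 0 := by
    intro h
    have := congrArg Complex.re h
    simp at this
  have hS : (starRingEnd ℂ) a₁ * a₀ + a₁ * (starRingEnd ℂ) a₀ =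
      ((2*(b₁*b₂ - c^2)/(1+c^2) : ℝ) : ℂ) := by
    rw [ha0, ha1]
    rw [map_div₀, map_div₀]
    simp only [map_add, map_sub, map_mul, map_one, Complex.conj_I, Complex.conj_ofReal]
    have hcC : ((1:ℂ) + (c:ℂ)^2) ≠ 0 := by exact_mod_cast hc.ne'
    have hIc'' : (1:ℂ) + -(I*(c:ℂ)) ≠ 0 := by rw [← sub_eq_add_neg]; exact hIc'
    push_cast
    field_simp [hIc, hIc'']
    ring_nf
    simp only [Complex.I_sq, Complex.I_pow_four]
    ring
  rw [hS]
  have hcos : z + z⁻¹ = 2 * ((Real.cos θ : ℝ) : ℂ) := by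
    rw [hzdef, ← Complex.exp_neg, Complex.ofReal_cos, mul_comm I (θ:ℂ), ← neg_mul,
      Complex.two_cos]
  have expand : z⁻¹ * (((k₁ * k₀ : ℝ) : ℂ) * (z^2 + 1 + z * ((2*(b₁*b₂ - c^2)/(1+c^2) : ℝ) : ℂ))) =
      ((k₁ * k₀ : ℝ) : ℂ) * ((z + z⁻¹) + ((2*(b₁*b₂ - c^2)/(1+c^2) : ℝ) : ℂ)) := by
    field_simp
  rw [expand, hcos, hK]
  push_cast
  have hD : Real.sqrt ((1-b₂^2)*(1-b₁^2)) = Real.sqrt ((1-b₁^2)*(1-b₂^2)) := by rw [mul_comm]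
  rw [hD]
  have hDpos : (0:ℝ) < Real.sqrt ((1-b₁^2)*(1-b₂^2)) := Real.sqrt_pos.mpr (by positivity)
  have hDC : ((Real.sqrt ((1-b₁^2)*(1-b₂^2)) : ℝ) : ℂ) ≠ 0 := by
    exact_mod_cast hDpos.ne'
  have hcC : ((1:ℂ) + (c:ℂ)^2) ≠ 0 := by exact_mod_cast hc.ne'
  have hD1 : ((Real.sqrt (1-b₁^2) : ℝ) : ℂ) ≠ 0 := by
    exact_mod_cast (Real.sqrt_pos.mpr hx1).ne'
  have hD2 : ((Real.sqrt (1-b₂^2) : ℝ) : ℂ) ≠ 0 := by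
    exact_mod_cast (Real.sqrt_pos.mpr hx2).ne'
  field_simp
  ring
end

section
/- Let b₁, b₂ ∈ (-1,1) and c ∈ R, and let α₀ = (b₁+ic)/(1+ic), α₁ = (b₂-ic)/(1+ic). Define the monic orthogonal polynomials by φ₀(z)=1, φ_{n+1}(z) = zφ_n(z) - conj(α_n)·φ_n*(z), where φ_n*(z) = z^n·conj(φ_n(1/conj(z))) is the reversed polynomial, and set φ₂*(z) accordingly. Then the equation φ₂(z) - φ₂*(z) = 0 has exactly the two solutions z = 1 and z = (c²-1)/(1+c²) - i·2c/(1+c²) on C. -/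
open Polynomial Complex
set_option maxHeartbeats 1000000

theorem stmt_14 (b₁ b₂ c : ℝ) (hb₁ : b₁ ∈ Set.Ioo (-1 : ℝ) 1) (hb₂ : b₂ ∈ Set.Ioo (-1 : ℝ) 1)
    (α : ℕ → ℂ)
    (hα0 : α 0 = ((b₁ : ℂ) + I * (c : ℂ)) / (1 + I * (c : ℂ)))
    (hα1 : α 1 = ((b₂ : ℂ) - I * (c : ℂ)) / (1 + I * (c : ℂ)))
    (φ : ℕ → Polynomial ℂ)
    (hφ0 : φ 0 = 1)
    (hφ : ∀ n, φ (n + 1) = X * φ n -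
      Polynomial.C (starRingEnd ℂ (α n)) * Polynomial.reflect n ((φ n).map (starRingEnd ℂ))) :
    ∀ z : ℂ, (φ 2 - Polynomial.reflect 2 ((φ 2).map (starRingEnd ℂ))).eval z = 0 ↔
      (z = 1 ∨ z = (((c ^ 2 - 1) / (1 + c ^ 2) : ℝ) : ℂ) - I * ((2 * c / (1 + c ^ 2) : ℝ) : ℂ)) := by
  intro z
  set u : ℂ := starRingEnd ℂ (α 1) * α 0 - starRingEnd ℂ (α 0) with hu
  set v : ℂ := -(starRingEnd ℂ (α 1)) with hv
  have h1 : φ 1 = X - C (starRingEnd ℂ (α 0)) := by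
    rw [hφ 0, hφ0]; simp
  have h2 : φ 2 = X ^ 2 + C u * X + C v := by
    rw [hφ 1, h1]
    have hm : (X - C (starRingEnd ℂ (α 0))).map (starRingEnd ℂ) = X - C (α 0) := by
      simp
    rw [hm, Polynomial.reflect_sub, Polynomial.reflect_one_X, Polynomial.reflect_C]
    simp only [hu, hv, map_sub, map_neg, map_mul]
    ring
  have hmap : (φ 2).map (starRingEnd ℂ)
      = X ^ 2 + C (starRingEnd ℂ u) * X + C (starRingEnd ℂ v) := by
    rw [h2]; simp
  have hrefl : Polynomial.reflect 2 ((φ 2).map (starRingEnd ℂ))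
      = 1 + C (starRingEnd ℂ u) * X + C (starRingEnd ℂ v) * X ^ 2 := by
    rw [hmap, Polynomial.reflect_add, Polynomial.reflect_add, Polynomial.reflect_C,
      show (C (starRingEnd ℂ u) * X : ℂ[X]) = C (starRingEnd ℂ u) * X ^ 1 by ring,
      Polynomial.reflect_C_mul_X_pow, Polynomial.reflect_monomial]
    norm_num [Polynomial.revAt_le]
  have heval : (φ 2 - Polynomial.reflect 2 ((φ 2).map (starRingEnd ℂ))).eval z
      = (1 - starRingEnd ℂ v) * z ^ 2 + (u - starRingEnd ℂ u) * z + (v - 1) := by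
    rw [Polynomial.eval_sub, hrefl, h2]; simp; ring
  have hd : (1 : ℂ) + I * (c : ℂ) ≠ 0 := by
    intro h
    have := congrArg Complex.re h
    simp at this
  have hb2 : (1 : ℂ) + (b₂ : ℂ) ≠ 0 := by
    intro h
    have := congrArg Complex.re h
    simp at this
    nlinarith [hb₂.1]
  have hc2 : ((1 : ℝ) + c ^ 2) ≠ 0 := by positivity
  have hc2c : (1 : ℂ) + (c : ℂ) ^ 2 ≠ 0 := by
    have h := Complex.ofReal_ne_zero.mpr hc2
    push_cast at h
    exact h
  -- rectangular forms
  have E0 : α 0 = (((b₁ + c ^ 2) / (1 + c ^ 2) : ℝ) : ℂ) + ((c * (1 - b₁) / (1 + c ^ 2) : ℝ) : ℂ) * I := by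
    rw [hα0, div_eq_iff hd]
    push_cast
    field_simp
    linear_combination (-(c : ℂ) ^ 2 * (1 - (b₁ : ℂ))) * Complex.I_sq
  have E1 : α 1 = (((b₂ - c ^ 2) / (1 + c ^ 2) : ℝ) : ℂ) + ((-(c * (1 + b₂)) / (1 + c ^ 2) : ℝ) : ℂ) * I := by
    rw [hα1, div_eq_iff hd]
    push_cast
    field_simp
    linear_combination ((c : ℂ) ^ 2 * (1 + (b₂ : ℂ))) * Complex.I_sq
  have E0c : starRingEnd ℂ (α 0)
      = (((b₁ + c ^ 2) / (1 + c ^ 2) : ℝ) : ℂ) - ((c * (1 - b₁) / (1 + c ^ 2) : ℝ) : ℂ) * I := by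
    rw [E0]; simp [Complex.conj_ofReal]; ring
  have E1c : starRingEnd ℂ (α 1)
      = (((b₂ - c ^ 2) / (1 + c ^ 2) : ℝ) : ℂ) - ((-(c * (1 + b₂)) / (1 + c ^ 2) : ℝ) : ℂ) * I := by
    rw [E1]; simp [Complex.conj_ofReal]; ring
  set r : ℂ := (((c ^ 2 - 1) / (1 + c ^ 2) : ℝ) : ℂ) - I * ((2 * c / (1 + c ^ 2) : ℝ) : ℂ) with hrdef
  have hlead : (1 : ℂ) - starRingEnd ℂ v ≠ 0 := by
    simp only [hv, map_neg, Complex.conj_conj, sub_neg_eq_add, hα1]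
    have h : (1:ℂ) + ((b₂:ℂ) - I*(c:ℂ))/(1+I*(c:ℂ)) = (1+(b₂:ℂ))/(1+I*(c:ℂ)) := by
      field_simp
      ring
    rw [h]
    exact div_ne_zero hb2 hd
  have hfac : (1 - starRingEnd ℂ v) * z ^ 2 + (u - starRingEnd ℂ u) * z + (v - 1)
      = (1 - starRingEnd ℂ v) * ((z - 1) * (z - r)) := by
    simp only [hu, hv, map_neg, map_sub, map_mul, Complex.conj_conj]
    rw [E0c, E1c, E0, E1, hrdef]
    simp only [Complex.ext_iff, Complex.add_re, Complex.add_im, Complex.mul_re, Complex.mul_im,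
      Complex.sub_re, Complex.sub_im, Complex.neg_re, Complex.neg_im, Complex.one_re,
      Complex.one_im, Complex.I_re, Complex.I_im, Complex.ofReal_re, Complex.ofReal_im,
      pow_two]
    have hcc : (1:ℝ)+c*c ≠ 0 := by nlinarith [mul_self_nonneg c]
    constructor
    · field_simp [hcc]
      ring
    · field_simp [hcc]
      ring
  rw [heval, hfac, mul_eq_zero, mul_eq_zero]
  constructor
  · rintro (h | h | h)
    · exact absurd h hlead
    · exact Or.inl (sub_eq_zero.mp h)
    · exact Or.inr (sub_eq_zero.mp h)
  · rintro (h | h)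
    · exact Or.inr (Or.inl (sub_eq_zero.mpr h))
    · exact Or.inr (Or.inr (sub_eq_zero.mpr h))
end

section
/- Let b₁, b₂ ∈ (-1,1), c ∈ R, and define the 2-periodic sequence α_{2n} = (b₁+ic)/(1+ic), α_{2n+1} = (b₂-ic)/(1+ic). With w = 1 and τ_0(1)=1, τ_{j+1}(1) = (τ_j(1) - conj(α_j))/(1 - τ_j(1)α_j), set q_j = |1 - τ_{j-1}(1)α_{j-1}|²/(1-|α_{j-1}|²). Then q₁q₂ < 1 if and only if b₁ + b₂ > 0, and in that case (1 - q₁q₂)/((1 - q₁q₂) + (q₁ + q₁q₂)) = (b₁+b₂)/(1+b₂). -/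
open Complex

theorem stmt_15 (b₁ b₂ c : ℝ) (hb₁ : b₁ ∈ Set.Ioo (-1 : ℝ) 1) (hb₂ : b₂ ∈ Set.Ioo (-1 : ℝ) 1)
    (α : ℕ → ℂ)
    (hα0 : ∀ n, α (2 * n) = ((b₁ : ℂ) + I * (c : ℂ)) / (1 + I * (c : ℂ)))
    (hα1 : ∀ n, α (2 * n + 1) = ((b₂ : ℂ) - I * (c : ℂ)) / (1 + I * (c : ℂ)))
    (τ : ℕ → ℂ) (hτ0 : τ 0 = 1)
    (hτ : ∀ j, τ (j + 1) = (τ j - starRingEnd ℂ (α j)) / (1 - τ j * α j))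
    (q : ℕ → ℝ)
    (hq : ∀ j, 1 ≤ j → q j =
      ‖1 - τ (j - 1) * α (j - 1)‖ ^ 2 / (1 - ‖α (j - 1)‖ ^ 2)) :
    (q 1 * q 2 < 1 ↔ 0 < b₁ + b₂) ∧
    (0 < b₁ + b₂ →
      (1 - q 1 * q 2) / ((1 - q 1 * q 2) + (q 1 + q 1 * q 2)) = (b₁ + b₂) / (1 + b₂)) := by
  obtain ⟨hb₁l, hb₁u⟩ := hb₁
  obtain ⟨hb₂l, hb₂u⟩ := hb₂
  have hc2 : (0:ℝ) < 1 + c ^ 2 := by positivity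
  have h1 : (1:ℂ) + I * (c:ℂ) ≠ 0 := by
    intro h
    have := congrArg Complex.re h
    simp at this
  have h2 : (1:ℂ) - I * (c:ℂ) ≠ 0 := by
    intro h
    have := congrArg Complex.re h
    simp at this
  have hA : α 0 = ((b₁ : ℂ) + I * (c : ℂ)) / (1 + I * (c : ℂ)) := by simpa using hα0 0
  have hB : α 1 = ((b₂ : ℂ) - I * (c : ℂ)) / (1 + I * (c : ℂ)) := by simpa using hα1 0
  have hb₁1 : ((1:ℂ) - b₁) ≠ 0 := by
    simp only [ne_eq, sub_eq_zero]
    intro h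
    have : (1:ℝ) = b₁ := by exact_mod_cast h
    linarith
  have h0' : (1:ℂ) - 1 * (((b₁:ℂ) + I * (c:ℂ)) / (1 + I * (c:ℂ))) = ((1:ℂ) - b₁) / (1 + I * (c:ℂ)) := by
    field_simp
    ring
  have h0 : 1 - τ 0 * α 0 = ((1:ℂ) - b₁) / (1 + I * (c:ℂ)) := by
    rw [hτ0, hA]; exact h0'
  have hC : starRingEnd ℂ (((b₁:ℂ) + I * (c:ℂ)) / (1 + I * (c:ℂ))) =
      ((b₁:ℂ) - I * (c:ℂ)) / (1 - I * (c:ℂ)) := by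
    simp only [map_div₀, map_sub, map_add, map_one, map_mul, Complex.conj_I, Complex.conj_ofReal]
    ring_nf
  have hτ1 : τ 1 = (1 + I * (c:ℂ)) / (1 - I * (c:ℂ)) := by
    rw [hτ 0, hτ0, hA, h0']
    rw [div_eq_div_iff (div_ne_zero hb₁1 h1) h2]
    have hR : ((1:ℂ) + I * (c:ℂ)) * (((1:ℂ) - b₁) / (1 + I * (c:ℂ))) = 1 - (b₁:ℂ) := by
      field_simp
    rw [hC, hR, sub_mul, div_mul_cancel₀ _ h2]
    ring
  have ht : 1 - τ 1 * α 1 = ((1:ℂ) - b₂) / (1 - I * (c:ℂ)) := by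
    rw [hτ1, hB]; field_simp; ring
  have hnsq1 : Complex.normSq (1 + I * (c:ℂ)) = 1 + c ^ 2 := by
    simp [Complex.normSq_apply]; ring
  have hnsq2 : Complex.normSq (1 - I * (c:ℂ)) = 1 + c ^ 2 := by
    simp [Complex.normSq_apply]; ring
  have hq1 : q 1 = (1 - b₁) / (1 + b₁) := by
    rw [hq 1 le_rfl]
    norm_num
    rw [h0, hA]
    rw [Complex.sq_norm, Complex.sq_norm]
    rw [map_div₀, map_div₀, hnsq1]
    have : Complex.normSq ((1:ℂ) - b₁) = (1 - b₁)^2 := by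
      simp [Complex.normSq_apply]; ring
    rw [this]
    have : Complex.normSq ((b₁:ℂ) + I * c) = b₁^2 + c^2 := by
      simp [Complex.normSq_apply]; ring
    rw [this]
    have e : 1 - (b₁ ^ 2 + c ^ 2) / (1 + c ^ 2) = (1 - b₁ ^ 2) / (1 + c ^ 2) := by
      field_simp
      ring
    rw [e]
    have k1 : (1:ℝ) + c ^ 2 ≠ 0 := by positivity
    have k2 : (1:ℝ) - b₁ ^ 2 ≠ 0 := by nlinarith
    have k3 : (1:ℝ) + b₁ ≠ 0 := by linarith
    field_simp
    ring
  have hq2 : q 2 = (1 - b₂) / (1 + b₂) := by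
    rw [hq 2 (by norm_num)]
    norm_num
    rw [ht, hB]
    rw [Complex.sq_norm, Complex.sq_norm]
    rw [map_div₀, map_div₀, hnsq1, hnsq2]
    have : Complex.normSq ((1:ℂ) - b₂) = (1 - b₂)^2 := by
      simp [Complex.normSq_apply]; ring
    rw [this]
    have : Complex.normSq ((b₂:ℂ) - I * c) = b₂^2 + c^2 := by
      simp [Complex.normSq_apply]; ring
    rw [this]
    have e : 1 - (b₂ ^ 2 + c ^ 2) / (1 + c ^ 2) = (1 - b₂ ^ 2) / (1 + c ^ 2) := by
      field_simp
      ring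
    rw [e]
    have k1 : (1:ℝ) + c ^ 2 ≠ 0 := by positivity
    have k2 : (1:ℝ) - b₂ ^ 2 ≠ 0 := by nlinarith
    have k3 : (1:ℝ) + b₂ ≠ 0 := by linarith
    field_simp
    ring
  rw [hq1, hq2]
  have hd1 : (0:ℝ) < 1 + b₁ := by linarith
  have hd2 : (0:ℝ) < 1 + b₂ := by linarith
  have hD : (0:ℝ) < (1 + b₁) * (1 + b₂) := mul_pos hd1 hd2
  constructor
  · rw [div_mul_div_comm, div_lt_one hD]
    constructor <;> intro h <;> nlinarith
  · intro h
    have e1 : 1 - (1 - b₁) / (1 + b₁) * ((1 - b₂) / (1 + b₂)) =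
        2 * (b₁ + b₂) / ((1 + b₁) * (1 + b₂)) := by
      field_simp
      ring
    have e2 : (1 - b₁) / (1 + b₁) + (1 - b₁) / (1 + b₁) * ((1 - b₂) / (1 + b₂)) =
        2 * (1 - b₁) / ((1 + b₁) * (1 + b₂)) := by
      field_simp
      ring
    rw [e1, e2, ← add_div]
    have e3 : 2 * (b₁ + b₂) + 2 * (1 - b₁) = 2 * (1 + b₂) := by ring
    rw [e3]
    have k1 : (1 + b₁) * (1 + b₂) ≠ 0 := hD.ne'
    have k2 : (2:ℝ) * (1 + b₂) ≠ 0 := by positivity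
    have k3 : (1:ℝ) + b₂ ≠ 0 := by linarith
    field_simp
end
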